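/- Let ω : ℕ → ℝ be a function with ω(r) → ∞ as r → ∞, and for each r let p(r) = (log r + ω(r))/r, assuming p(r) ≤ 1. Let X be a random edge-subgraph of K_{r,r} drawn from G(K_{r,r}, p(r)). Then the probability that X is connected tends to 1 as r → ∞. -/

import Mathlib

open SimpleGraph

/-- The Bernoulli measure on `Bool` with success probability `p`. -/
noncomputable def bernoulliMeasure (p : ℝ) : MeasureTheory.Measure Bool :=
  ENNReal.ofReal p • MeasureTheory.Measure.dirac true +
    ENNReal.ofReal (1 - p) • MeasureTheory.Measure.dirac false

/-- The distribution `G(K_{r,r}, p)`: each of the `r * r` potential edges of the complete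
bipartite graph is present independently with probability `p`; outcomes are indexed by
functions recording the presence of each potential edge. -/
noncomputable def bipartiteRandomModel (r : ℕ) (p : ℝ) :
    MeasureTheory.Measure (Fin r × Fin r → Bool) :=
  MeasureTheory.Measure.pi fun _ => bernoulliMeasure p

/-- The edge-subgraph of `K_{r,r}` determined by an outcome `ω`. -/
def graphOf {r : ℕ} (ω : Fin r × Fin r → Bool) : SimpleGraph (Fin r ⊕ Fin r) :=
  SimpleGraph.fromRel (fun x y => ∃ i j, x = Sum.inl i ∧ y = Sum.inr j ∧ ω (i, j) = true)


open MeasureTheory SimpleGraph Finset Filter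

lemma bern_false (p : ℝ) : bernoulliMeasure p {false} = ENNReal.ofReal (1 - p) := by
  simp [bernoulliMeasure]

lemma bern_univ (p : ℝ) (h0 : 0 ≤ p) (h1 : p ≤ 1) : bernoulliMeasure p Set.univ = 1 := by
  simp [bernoulliMeasure]
  rw [← ENNReal.ofReal_add h0 (by linarith)]
  norm_num

instance bern_finite (p : ℝ) : IsFiniteMeasure (bernoulliMeasure p) := by
  constructor
  simp [bernoulliMeasure]

lemma bern_prob (p : ℝ) (h0 : 0 ≤ p) (h1 : p ≤ 1) :
    IsProbabilityMeasure (bernoulliMeasure p) := ⟨bern_univ p h0 h1⟩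

lemma model_prob (r : ℕ) (p : ℝ) (h0 : 0 ≤ p) (h1 : p ≤ 1) :
    IsProbabilityMeasure (bipartiteRandomModel r p) := by
  haveI := bern_prob p h0 h1
  unfold bipartiteRandomModel
  infer_instance

lemma cyl_measure (r : ℕ) (p : ℝ) (h0 : 0 ≤ p) (h1 : p ≤ 1) (F : Finset (Fin r × Fin r)) :
    bipartiteRandomModel r p {ω | ∀ e ∈ F, ω e = false}
      = ENNReal.ofReal ((1 - p) ^ F.card) := by
  haveI := bern_prob p h0 h1
  have hset : {ω : Fin r × Fin r → Bool | ∀ e ∈ F, ω e = false}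
      = Set.pi Set.univ (fun e => if e ∈ F then ({false} : Set Bool) else Set.univ) := by
    ext ω
    simp only [Set.mem_setOf_eq, Set.mem_pi, Set.mem_univ, forall_true_left]
    constructor
    · intro h e
      by_cases he : e ∈ F <;> simp [he, h]
    · intro h e he
      have := h e
      simpa [he] using this
  rw [hset, bipartiteRandomModel, MeasureTheory.Measure.pi_pi]
  have : ∀ i : Fin r × Fin r, (bernoulliMeasure p) (if i ∈ F then ({false} : Set Bool) else Set.univ)
      = if i ∈ F then ENNReal.ofReal (1 - p) else 1 := by
    intro i
    by_cases hi : i ∈ F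
    · simp only [hi, if_true]; exact bern_false p
    · simp only [hi, if_false]; exact bern_univ p h0 h1
  simp only [this]
  rw [Finset.prod_ite_mem Finset.univ F (fun _ => ENNReal.ofReal (1 - p))]
  simp [Finset.prod_const, ENNReal.ofReal_pow (by linarith : (0:ℝ) ≤ 1 - p)]

lemma graphOf_adj {r : ℕ} (ω : Fin r × Fin r → Bool) (i j : Fin r) :
    (graphOf ω).Adj (Sum.inl i) (Sum.inr j) ↔ ω (i, j) = true := by
  simp [graphOf, fromRel_adj]

/-- cross-edge set of a vertex subset -/
def crossE {r : ℕ} (S : Finset (Fin r ⊕ Fin r)) : Finset (Fin r × Fin r) :=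
  Finset.univ.filter fun e => ¬ ((Sum.inl e.1 ∈ S) ↔ (Sum.inr e.2 ∈ S))

lemma disc_subset_cyl {r : ℕ} (hr : 1 ≤ r) (ω : Fin r × Fin r → Bool)
    (h : ¬ (graphOf ω).Connected) :
    ∃ S : Finset (Fin r ⊕ Fin r), S ≠ ∅ ∧ S ≠ Finset.univ ∧
      ∀ e ∈ crossE S, ω e = false := by
  classical
  haveI : NeZero r := ⟨by omega⟩
  have hne : Nonempty (Fin r ⊕ Fin r) := ⟨Sum.inl 0⟩
  rw [connected_iff] at h
  push_neg at h
  have hpre : ¬ (graphOf ω).Preconnected := fun hp => isEmpty_iff.mp (h hp) (Sum.inl 0)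
  rw [Preconnected] at hpre
  push_neg at hpre
  obtain ⟨u, v, huv⟩ := hpre
  refine ⟨Finset.univ.filter (fun x => (graphOf ω).Reachable u x), ?_, ?_, ?_⟩
  · intro hS
    have : u ∈ Finset.univ.filter (fun x => (graphOf ω).Reachable u x) := by
      simp [SimpleGraph.Reachable.refl]
    rw [hS] at this; simp at this
  · intro hS
    have : v ∈ Finset.univ.filter (fun x => (graphOf ω).Reachable u x) := by
      rw [hS]; simp
    simp at this; exact huv this
  · rintro ⟨i, j⟩ he
    simp only [crossE, Finset.mem_filter, Finset.mem_univ, true_and] at he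
    by_contra hω
    have hadj : (graphOf ω).Adj (Sum.inl i) (Sum.inr j) := by
      rw [graphOf_adj]; revert hω; cases ω (i, j) <;> simp
    exact he ⟨fun h1 => h1.trans hadj.reachable, fun h2 => h2.trans hadj.symm.reachable⟩

lemma crossE_card {r : ℕ} (S : Finset (Fin r ⊕ Fin r)) :
    (crossE S).card = S.toLeft.card * (r - S.toRight.card)
      + (r - S.toLeft.card) * S.toRight.card := by
  classical
  have : crossE S = S.toLeft ×ˢ S.toRightᶜ ∪ S.toLeftᶜ ×ˢ S.toRight := by
    ext ⟨i, j⟩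
    simp only [crossE, Finset.mem_filter, Finset.mem_univ, true_and, Finset.mem_union,
      Finset.mem_product, Finset.mem_compl, Finset.mem_toLeft, Finset.mem_toRight]
    tauto
  rw [this, Finset.card_union_of_disjoint, Finset.card_product, Finset.card_product,
    Finset.card_compl, Finset.card_compl]
  · simp
  · rw [Finset.disjoint_left]
    rintro ⟨i, j⟩ h1 h2
    rw [Finset.mem_product] at h1 h2
    exact (Finset.mem_compl.1 h2.1) h1.1

lemma crossE_compl {r : ℕ} (S : Finset (Fin r ⊕ Fin r)) : crossE Sᶜ = crossE S := by
  classical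
  ext ⟨i, j⟩
  simp only [crossE, Finset.mem_filter, Finset.mem_univ, true_and, Finset.mem_compl]
  tauto

lemma log_interp {s r t : ℝ} (hs : 1 ≤ s) (hsr : s ≤ r) (ht0 : 0 ≤ t) (ht1 : t ≤ 1)
    (hst : s = (1 - t) + t * r) : t * Real.log r ≤ Real.log s := by
  have h := strictConcaveOn_log_Ioi.concaveOn.2 (Set.mem_Ioi.2 (by norm_num : (0:ℝ) < 1))
    (Set.mem_Ioi.2 (by linarith : (0:ℝ) < r)) (by linarith : 0 ≤ 1 - t) ht0 (by ring)
  simp only [smul_eq_mul, Real.log_one, mul_zero, mul_one, zero_add] at h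
  calc t * Real.log r ≤ Real.log (1 - t + t * r) := h
    _ = Real.log s := by rw [hst]

lemma per_s (r s : ℕ) (p q M : ℝ) (hs1 : 1 ≤ s) (hsr : s ≤ r) (hq : q = p * r) (hp0 : 0 ≤ p)
    (hM1 : M ≤ q * (1 - 1 / (2 * r)) - (Real.log (2 * r) + 1))
    (hM2 : M ≤ q / 2 - (Real.log 2 + 1)) :
    ((r + r).choose s : ℝ) * Real.exp (-(p * (s * r - s ^ 2 / 2))) ≤ Real.exp (-M) ^ s := by
  have hr1 : (1:ℝ) ≤ (r:ℝ) := by exact_mod_cast hs1.trans hsr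
  have hrpos : (0:ℝ) < r := by linarith
  have hspos : (0:ℝ) < s := by exact_mod_cast hs1
  have hsr' : (s:ℝ) ≤ (r:ℝ) := by exact_mod_cast hsr
  -- Step 1: choose bound
  have h1 : ((r + r).choose s : ℝ) ≤ (2 * r) ^ s / (Nat.factorial s) := by
    have h := Nat.choose_le_pow_div (α := ℝ) s (r + r)
    refine h.trans (le_of_eq ?_)
    congr 1
    push_cast; ring
  -- Step 2: 1/s! ≤ exp s / s^s
  have h2 : ((s:ℝ)) ^ s / (Nat.factorial s) ≤ Real.exp s :=
    Real.pow_div_factorial_le_exp (x := (s:ℝ)) (by positivity) s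
  have hfac : (0:ℝ) < Nat.factorial s := by positivity
  have h3 : ((r + r).choose s : ℝ) ≤ (2 * r) ^ s * Real.exp s / (s:ℝ) ^ s := by
    refine h1.trans ?_
    rw [div_le_div_iff₀ hfac (by positivity : (0:ℝ) < (s:ℝ) ^ s)]
    rw [div_le_iff₀ hfac] at h2
    calc (2 * (r:ℝ)) ^ s * (s:ℝ) ^ s ≤ (2 * (r:ℝ)) ^ s * (Real.exp s * Nat.factorial s) := by
          apply mul_le_mul_of_nonneg_left h2 (by positivity)
      _ = (2 * (r:ℝ)) ^ s * Real.exp s * Nat.factorial s := by ring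
  -- Step 3: everything as exp
  have hexp2r : ((2:ℝ) * r) ^ s = Real.exp (s * Real.log (2 * r)) := by
    rw [Real.exp_nat_mul, Real.exp_log (by positivity)]
  have hexps : ((s:ℝ)) ^ s = Real.exp (s * Real.log s) := by
    rw [Real.exp_nat_mul, Real.exp_log hspos]
  have h4 : ((r + r).choose s : ℝ) * Real.exp (-(p * (s * r - s ^ 2 / 2)))
      ≤ Real.exp (s * (Real.log (2 * r) + 1 - Real.log s - q + q * s / (2 * r))) := by
    calc ((r + r).choose s : ℝ) * Real.exp (-(p * (s * r - s ^ 2 / 2)))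
        ≤ ((2 * r) ^ s * Real.exp s / (s:ℝ) ^ s) * Real.exp (-(p * (s * r - s ^ 2 / 2))) := by
          apply mul_le_mul_of_nonneg_right h3 (Real.exp_nonneg _)
      _ = Real.exp (s * (Real.log (2 * r) + 1 - Real.log s - q + q * s / (2 * r))) := by
          rw [hexp2r, hexps, ← Real.exp_add, ← Real.exp_sub, ← Real.exp_add]
          · congr 1
            have hp' : p = q / r := by rw [hq]; field_simp
            rw [hp']
            field_simp
            ring
  refine h4.trans ?_
  rw [← Real.exp_nat_mul]
  apply Real.exp_le_exp.2
  -- Step 4: the bracket bound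
  have hbr : Real.log (2 * r) + 1 - Real.log s - q + q * s / (2 * r) ≤ -M := by
    rcases eq_or_lt_of_le hs1 with h | hs2
    · -- s = 1
      have : (s:ℝ) = 1 := by exact_mod_cast h.symm
      rw [this]
      simp only [Real.log_one]
      have : q * 1 / (2 * r) = q * (1 / (2*r)) := by ring
      nlinarith [hM1]
    · -- 2 ≤ s, so r ≥ 2
      have hr2 : (2:ℝ) ≤ (r:ℝ) := by
        have : 2 ≤ s := hs2
        exact_mod_cast le_trans this hsr
      set t : ℝ := ((s:ℝ) - 1) / ((r:ℝ) - 1) with ht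
      have hr1' : (r:ℝ) - 1 > 0 := by linarith
      have hs1' : (1:ℝ) ≤ (s:ℝ) := by exact_mod_cast hs1
      have ht0 : 0 ≤ t := div_nonneg (by linarith) (le_of_lt hr1')
      have ht1 : t ≤ 1 := by rw [div_le_one hr1']; linarith
      have hst : (s:ℝ) = (1 - t) + t * r := by rw [ht]; field_simp; ring
      have hlog := log_interp (by exact_mod_cast hs1) hsr' ht0 ht1 hst
      have hlog2r : Real.log (2 * r) = Real.log 2 + Real.log r := by
        rw [Real.log_mul (by norm_num) (by positivity)]
      rw [hlog2r] at hM1 ⊢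
      -- goal: log2 + log r + 1 - log s - q + q*s/(2r) ≤ -M
      have key : Real.log 2 + Real.log r + 1 - t * Real.log r - q + q * s / (2 * r)
          = (1 - t) * (-(q * (1 - 1 / (2 * r)) - (Real.log 2 + Real.log r + 1)))
            + t * (-(q / 2 - (Real.log 2 + 1))) := by
        rw [hst]
        field_simp
        ring
      nlinarith [mul_le_mul_of_nonneg_left hM1 (by linarith : 0 ≤ 1 - t),
        mul_le_mul_of_nonneg_left hM2 ht0, hlog]
  calc (s:ℝ) * (Real.log (2 * r) + 1 - Real.log s - q + q * s / (2 * r))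
      ≤ (s:ℝ) * (-M) := by apply mul_le_mul_of_nonneg_left hbr (by positivity)
    _ = (s:ℝ) * (-M) := rfl

lemma crossE_card_lb {r : ℕ} (S : Finset (Fin r ⊕ Fin r)) :
    (S.card : ℝ) * r - (S.card : ℝ) ^ 2 / 2 ≤ ((crossE S).card : ℝ) := by
  have ha : S.toLeft.card ≤ r := by
    simpa using (Finset.card_le_univ S.toLeft)
  have hb : S.toRight.card ≤ r := by
    simpa using (Finset.card_le_univ S.toRight)
  have hab : S.toLeft.card + S.toRight.card = S.card := Finset.card_toLeft_add_card_toRight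
  rw [crossE_card]
  have ha' : ((S.toLeft.card : ℝ)) ≤ r := by exact_mod_cast ha
  have hb' : ((S.toRight.card : ℝ)) ≤ r := by exact_mod_cast hb
  have hab' : (S.toLeft.card : ℝ) + S.toRight.card = S.card := by exact_mod_cast hab
  push_cast [Nat.cast_sub ha, Nat.cast_sub hb]
  nlinarith [sq_nonneg ((S.toLeft.card : ℝ) - S.toRight.card)]

lemma pow_le_exp_neg {p : ℝ} (hp0 : 0 ≤ p) (hp1 : p ≤ 1) {c : ℝ} (n : ℕ) (hc : c ≤ n) :
    (1 - p) ^ n ≤ Real.exp (-(p * c)) := by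
  calc (1 - p) ^ n ≤ Real.exp (-p) ^ n := by
        apply pow_le_pow_left₀ (by linarith)
        linarith [Real.add_one_le_exp (-p)]
      _ = Real.exp (-(p * n)) := by rw [← Real.exp_nat_mul]; ring_nf
      _ ≤ Real.exp (-(p * c)) := by
        apply Real.exp_le_exp.2
        have := mul_le_mul_of_nonneg_left hc hp0
        linarith

lemma master (r : ℕ) (p q M : ℝ) (hr : 1 ≤ r) (hp0 : 0 ≤ p) (hp1 : p ≤ 1) (hq : q = p * r)
    (hM1 : M ≤ q * (1 - 1 / (2 * r)) - (Real.log (2 * r) + 1))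
    (hM2 : M ≤ q / 2 - (Real.log 2 + 1)) (hM : 1 ≤ M) :
    ∑ S ∈ ((Finset.univ.powerset : Finset (Finset (Fin r ⊕ Fin r))) \ {∅, Finset.univ}),
      (1 - p) ^ (crossE S).card ≤ 4 * Real.exp (-M) := by
  classical
  set V := Fin r ⊕ Fin r
  set bad : Finset (Finset V) := Finset.univ.powerset \ {∅, Finset.univ} with hbad
  have hcardV : Fintype.card V = r + r := by
    simp [V, Fintype.card_sum]
  have hmem : ∀ S : Finset V, S ∈ bad ↔ S ≠ ∅ ∧ S ≠ Finset.univ := by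
    intro S
    simp [hbad, Finset.mem_sdiff, Finset.mem_powerset, Finset.subset_univ]
  have hnonneg : ∀ S : Finset V, (0:ℝ) ≤ (1 - p) ^ (crossE S).card :=
    fun S => pow_nonneg (by linarith) _
  -- split into small and large
  set bad1 : Finset (Finset V) := bad.filter (fun S => S.card ≤ r) with hbad1
  have hsplit : ∑ S ∈ bad, (1 - p) ^ (crossE S).card
      ≤ 2 * ∑ S ∈ bad1, (1 - p) ^ (crossE S).card := by
    rw [← Finset.sum_filter_add_sum_filter_not bad (fun S => S.card ≤ r)]
    have himg : ∑ S ∈ bad.filter (fun S => ¬ S.card ≤ r), (1 - p) ^ (crossE S).card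
        ≤ ∑ S ∈ bad1, (1 - p) ^ (crossE S).card := by
      have : ∑ S ∈ bad.filter (fun S => ¬ S.card ≤ r), (1 - p) ^ (crossE S).card
          = ∑ S ∈ (bad.filter (fun S => ¬ S.card ≤ r)).image compl,
              (1 - p) ^ (crossE S).card := by
        rw [Finset.sum_image]
        · apply Finset.sum_congr rfl
          intro S _
          rw [crossE_compl]
        · intro a _ b _ hab
          exact compl_injective hab
      rw [this]
      apply Finset.sum_le_sum_of_subset_of_nonneg
      · intro S hS
        simp only [Finset.mem_image] at hS
        obtain ⟨T, hT, rfl⟩ := hS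
        simp only [Finset.mem_filter] at hT
        obtain ⟨hTbad, hTc⟩ := hT
        rw [hmem] at hTbad
        rw [hbad1, Finset.mem_filter, hmem]
        refine ⟨⟨?_, ?_⟩, ?_⟩
        · intro h; apply hTbad.2
          rwa [Finset.compl_eq_empty_iff] at h
        · intro h; apply hTbad.1
          rwa [Finset.compl_eq_univ_iff] at h
        · have := Finset.card_compl T
          rw [hcardV] at this
          omega
      · intro S _ _; exact hnonneg S
    nlinarith [Finset.sum_nonneg (fun S (_ : S ∈ bad1) => hnonneg S)]
  refine hsplit.trans ?_
  -- bound each small term by its card-based bound and fiber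
  have hstep2 : ∑ S ∈ bad1, (1 - p) ^ (crossE S).card
      ≤ ∑ s ∈ Finset.Icc 1 r, ((r + r).choose s : ℝ)
          * Real.exp (-(p * (s * r - (s:ℝ) ^ 2 / 2))) := by
    have hmaps : ∀ S ∈ bad1, S.card ∈ Finset.Icc 1 r := by
      intro S hS
      rw [hbad1, Finset.mem_filter, hmem] at hS
      rw [Finset.mem_Icc]
      refine ⟨?_, hS.2⟩
      rw [Nat.one_le_iff_ne_zero]
      simpa [Finset.card_eq_zero] using hS.1.1
    rw [← Finset.sum_fiberwise_of_maps_to hmaps (fun S => (1 - p) ^ (crossE S).card)]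
    apply Finset.sum_le_sum
    intro s hs
    rw [Finset.mem_Icc] at hs
    calc ∑ S ∈ bad1.filter (fun S => S.card = s), (1 - p) ^ (crossE S).card
        ≤ ∑ S ∈ bad1.filter (fun S => S.card = s),
            Real.exp (-(p * (s * r - (s:ℝ) ^ 2 / 2))) := by
          apply Finset.sum_le_sum
          intro S hS
          simp only [Finset.mem_filter] at hS
          have hcs : S.card = s := hS.2
          have := crossE_card_lb S
          rw [hcs] at this
          exact pow_le_exp_neg hp0 hp1 _ this
      _ = (bad1.filter (fun S => S.card = s)).card
            * Real.exp (-(p * (s * r - (s:ℝ) ^ 2 / 2))) := by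
          rw [Finset.sum_const, nsmul_eq_mul]
      _ ≤ ((r + r).choose s : ℝ) * Real.exp (-(p * (s * r - (s:ℝ) ^ 2 / 2))) := by
          apply mul_le_mul_of_nonneg_right _ (Real.exp_nonneg _)
          have hsub : bad1.filter (fun S => S.card = s) ⊆ Finset.powersetCard s Finset.univ := by
            intro S hS
            simp only [Finset.mem_filter] at hS
            rw [Finset.mem_powersetCard]
            exact ⟨Finset.subset_univ _, hS.2⟩
          have := Finset.card_le_card hsub
          rw [Finset.card_powersetCard, Finset.card_univ, hcardV] at this
          exact_mod_cast this
  -- geometric bound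
  have hper : ∑ s ∈ Finset.Icc 1 r, ((r + r).choose s : ℝ)
        * Real.exp (-(p * (s * r - (s:ℝ) ^ 2 / 2)))
      ≤ ∑ s ∈ Finset.Icc 1 r, Real.exp (-M) ^ s := by
    apply Finset.sum_le_sum
    intro s hs
    rw [Finset.mem_Icc] at hs
    exact per_s r s p q M hs.1 hs.2 hq hp0 hM1 hM2
  have hy : Real.exp (-M) ≤ 1/2 := by
    calc Real.exp (-M) ≤ Real.exp (-1) := Real.exp_le_exp.2 (by linarith)
      _ ≤ 1/2 := by
        have h2 : (2:ℝ) ≤ Real.exp 1 := by linarith [Real.add_one_le_exp 1]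
        rw [Real.exp_neg]
        rw [inv_le_comm₀ (Real.exp_pos 1) (by norm_num)]
        linarith
  have hy0 : 0 ≤ Real.exp (-M) := Real.exp_nonneg _
  have hgeom : ∑ s ∈ Finset.Icc 1 r, Real.exp (-M) ^ s ≤ 2 * Real.exp (-M) := by
    set y := Real.exp (-M) with hy'
    have h1 : ∑ s ∈ Finset.Icc 1 r, y ^ s = y * ∑ i ∈ Finset.range r, y ^ i := by
      rw [← Finset.Ico_add_one_right_eq_Icc, Finset.sum_Ico_eq_sum_range]
      simp only [Nat.add_sub_cancel_right, Nat.add_sub_cancel, Nat.succ_sub_one]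
      rw [Finset.mul_sum]
      apply Finset.sum_congr rfl
      intro i _
      rw [pow_add]
      ring
    rw [h1]
    have h2 : ∑ i ∈ Finset.range r, y ^ i ≤ 2 := by
      have hne : y ≠ 1 := by intro h; rw [h] at hy; norm_num at hy
      rw [geom_sum_eq hne]
      have hyr0 : 0 ≤ y ^ r := pow_nonneg hy0 r
      have hden : y - 1 < 0 := by linarith
      rw [div_le_iff_of_neg hden]
      nlinarith
    nlinarith
  calc 2 * ∑ S ∈ bad1, (1 - p) ^ (crossE S).card
      ≤ 2 * ∑ s ∈ Finset.Icc 1 r, ((r + r).choose s : ℝ)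
          * Real.exp (-(p * (s * r - (s:ℝ) ^ 2 / 2))) := by linarith [hstep2]
    _ ≤ 2 * ∑ s ∈ Finset.Icc 1 r, Real.exp (-M) ^ s := by linarith [hper]
    _ ≤ 2 * (2 * Real.exp (-M)) := by linarith [hgeom]
    _ = 4 * Real.exp (-M) := by ring

theorem stmt12 (w : ℕ → ℝ) (hw : Filter.Tendsto w Filter.atTop Filter.atTop)
    (p : ℕ → ℝ) (hp : ∀ r : ℕ, p r = (Real.log r + w r) / r)
    (hp1 : ∀ r : ℕ, p r ≤ 1) :
    Filter.Tendsto
      (fun r : ℕ => bipartiteRandomModel r (p r) {ω | (graphOf ω).Connected})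
      Filter.atTop (nhds 1) := by
  classical
  set M : ℕ → ℝ := fun r => min (w r - 3) ((Real.log r + w r) / 2 - 3) with hM
  -- M tends to atTop
  have hlog : Tendsto (fun r : ℕ => Real.log r) atTop atTop :=
    Real.tendsto_log_atTop.comp tendsto_natCast_atTop_atTop
  have hM1t : Tendsto (fun r => w r - 3) atTop atTop :=
    tendsto_atTop_add_const_right _ (-3) hw |>.congr (by intro r; ring)
  have hM2t : Tendsto (fun r : ℕ => (Real.log r + w r) / 2 - 3) atTop atTop := by
    apply tendsto_atTop_add_const_right
    exact (Filter.Tendsto.atTop_add_atTop hlog hw).atTop_div_const (by norm_num)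
  have hMt : Tendsto M atTop atTop := by
    rw [tendsto_atTop] at hM1t hM2t ⊢
    intro b
    filter_upwards [hM1t b, hM2t b] with r h1 h2
    exact le_min h1 h2
  -- the real bound tends to 0
  have hBt : Tendsto (fun r => 4 * Real.exp (-(M r))) atTop (nhds 0) := by
    have : Tendsto (fun r => Real.exp (-(M r))) atTop (nhds 0) :=
      Real.tendsto_exp_atBot.comp (tendsto_neg_atBot_iff.2 hMt)
    simpa using this.const_mul 4
  -- lower bound function tends to 1
  have hLt : Tendsto (fun r => 1 - ENNReal.ofReal (4 * Real.exp (-(M r)))) atTop (nhds 1) := by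
    have h0 : Tendsto (fun r => ENNReal.ofReal (4 * Real.exp (-(M r)))) atTop (nhds 0) := by
      have := (ENNReal.continuous_ofReal.tendsto 0).comp hBt
      simpa only [Function.comp_def, ENNReal.ofReal_zero] using this
    have hc : Continuous (fun x : ENNReal => 1 - x) :=
      ENNReal.continuous_sub_left ENNReal.one_ne_top
    have := (hc.tendsto 0).comp h0
    simpa only [Function.comp_def, tsub_zero] using this
  -- eventual bounds
  apply tendsto_of_tendsto_of_tendsto_of_le_of_le' hLt tendsto_const_nhds
  · -- eventually lower ≤ μ conn
    have hev : ∀ᶠ r : ℕ in atTop, 1 ≤ r ∧ 4 ≤ w r ∧ 1 ≤ M r := by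
      filter_upwards [eventually_ge_atTop 1, hw.eventually_ge_atTop 4,
        hMt.eventually_ge_atTop 1] with r h1 h2 h3
      exact ⟨h1, h2, h3⟩
    filter_upwards [hev] with r ⟨hr1, hw4, hM1'⟩
    -- basic facts
    have hrR : (1:ℝ) ≤ (r:ℝ) := by exact_mod_cast hr1
    have hrpos : (0:ℝ) < r := by linarith
    have hlogr : 0 ≤ Real.log r := Real.log_nonneg hrR
    set q : ℝ := Real.log r + w r with hqdef
    have hq0 : 0 ≤ q := by simp only [hqdef]; linarith
    have hp0 : 0 ≤ p r := by rw [hp r]; positivity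
    have hqeq : q = p r * r := by
      rw [hp r]
      field_simp
      exact hqdef
    have hqler : q ≤ r := by
      have := hp1 r
      rw [hp r, div_le_one hrpos] at this
      exact this
    have hlog2 : Real.log 2 ≤ 1 := by
      have := Real.log_le_sub_one_of_pos (by norm_num : (0:ℝ) < 2)
      linarith
    have hlog2r : Real.log (2 * r) = Real.log 2 + Real.log r :=
      Real.log_mul (by norm_num) (by positivity)
    have hMa : M r ≤ q * (1 - 1 / (2 * r)) - (Real.log (2 * r) + 1) := by
      have h1 : q * (1 / (2 * (r:ℝ))) ≤ 1 / 2 := by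
        rw [mul_one_div, div_le_div_iff₀ (by positivity) (by norm_num : (0:ℝ) < 2)]
        linarith
      have h2 : M r ≤ w r - 3 := min_le_left _ _
      have : q * (1 - 1 / (2 * r)) = q - q * (1 / (2*r)) := by ring
      rw [this, hlog2r, hqdef]
      simp only [hqdef] at h1
      linarith
    have hMb : M r ≤ q / 2 - (Real.log 2 + 1) := by
      have h2 : M r ≤ (Real.log r + w r) / 2 - 3 := min_le_right _ _
      rw [hqdef]
      linarith
    -- probability measure
    haveI hprob : IsProbabilityMeasure (bipartiteRandomModel r (p r)) :=
      model_prob r (p r) hp0 (hp1 r)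
    -- union bound
    set bad : Finset (Finset (Fin r ⊕ Fin r)) := Finset.univ.powerset \ {∅, Finset.univ}
      with hbaddef
    have hsub : {ω : Fin r × Fin r → Bool | ¬ (graphOf ω).Connected}
        ⊆ ⋃ S ∈ bad, {ω | ∀ e ∈ crossE S, ω e = false} := by
      intro ω hω
      obtain ⟨S, hS1, hS2, hS3⟩ := disc_subset_cyl hr1 ω hω
      apply Set.mem_biUnion (show S ∈ bad by
        simp [hbaddef, Finset.mem_sdiff, hS1, hS2])
      exact hS3
    have hdisc : bipartiteRandomModel r (p r) {ω | ¬ (graphOf ω).Connected}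
        ≤ ENNReal.ofReal (4 * Real.exp (-(M r))) := by
      calc bipartiteRandomModel r (p r) {ω | ¬ (graphOf ω).Connected}
          ≤ bipartiteRandomModel r (p r) (⋃ S ∈ bad, {ω | ∀ e ∈ crossE S, ω e = false}) :=
            measure_mono hsub
        _ ≤ ∑ S ∈ bad, bipartiteRandomModel r (p r) {ω | ∀ e ∈ crossE S, ω e = false} :=
            measure_biUnion_finset_le bad _
        _ = ∑ S ∈ bad, ENNReal.ofReal ((1 - p r) ^ (crossE S).card) := by
            apply Finset.sum_congr rfl
            intro S _
            exact cyl_measure r (p r) hp0 (hp1 r) (crossE S)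
        _ = ENNReal.ofReal (∑ S ∈ bad, (1 - p r) ^ (crossE S).card) := by
            rw [ENNReal.ofReal_sum_of_nonneg]
            intro S _
            exact pow_nonneg (by linarith [hp1 r]) _
        _ ≤ ENNReal.ofReal (4 * Real.exp (-(M r))) := by
            apply ENNReal.ofReal_le_ofReal
            exact master r (p r) q (M r) hr1 hp0 (hp1 r) hqeq hMa hMb hM1'
    -- conclude lower bound
    rw [tsub_le_iff_right]
    have hcover : (Set.univ : Set (Fin r × Fin r → Bool))
        ⊆ {ω | (graphOf ω).Connected} ∪ {ω | ¬ (graphOf ω).Connected} := by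
      intro ω _
      by_cases h : (graphOf ω).Connected
      · exact Or.inl h
      · exact Or.inr h
    calc (1 : ENNReal) = bipartiteRandomModel r (p r) Set.univ := (measure_univ).symm
      _ ≤ bipartiteRandomModel r (p r) ({ω | (graphOf ω).Connected}
            ∪ {ω | ¬ (graphOf ω).Connected}) := measure_mono hcover
      _ ≤ bipartiteRandomModel r (p r) {ω | (graphOf ω).Connected}
            + bipartiteRandomModel r (p r) {ω | ¬ (graphOf ω).Connected} := measure_union_le _ _
      _ ≤ bipartiteRandomModel r (p r) {ω | (graphOf ω).Connected}
            + ENNReal.ofReal (4 * Real.exp (-(M r))) := by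
            exact add_le_add le_rfl hdisc
  · -- eventually μ conn ≤ 1
    have hev : ∀ᶠ r : ℕ in atTop, 1 ≤ r ∧ 4 ≤ w r := by
      filter_upwards [eventually_ge_atTop 1, hw.eventually_ge_atTop 4] with r h1 h2
      exact ⟨h1, h2⟩
    filter_upwards [hev] with r ⟨hr1, hw4⟩
    have hrR : (1:ℝ) ≤ (r:ℝ) := by exact_mod_cast hr1
    have hp0 : 0 ≤ p r := by
      rw [hp r]
      have : 0 ≤ Real.log r := Real.log_nonneg hrR
      positivity
    haveI : IsProbabilityMeasure (bipartiteRandomModel r (p r)) :=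
      model_prob r (p r) hp0 (hp1 r)
    exact prob_le_one
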